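/- Let μ = 59729/19885499729 and c = (149896229/10)·√(1495978707/3317816087784734) (Earth–Sun values), and let Z0 = (2499985012616009587660193140271/5000000000000000000000000000000, 1082531750278361975463116188557/1250000000000000000000000000000). Then |f(Z0)| < 10⁻³¹ and |g(Z0)| < 10⁻³¹. -/

import Mathlib

/-- The Newtonian effective potential of the circular restricted three body problem. -/
noncomputable def w0 (μ ξ η : ℝ) : ℝ :=
  (ξ ^ 2 + η ^ 2) / 2 + (1 - μ) / Real.sqrt ((ξ + μ) ^ 2 + η ^ 2)
    + μ / Real.sqrt ((ξ + μ - 1) ^ 2 + η ^ 2)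

/-- The post-Newtonian correction `w1` to the effective potential, at zero synodic
velocity. -/
noncomputable def w1 (μ ξ η : ℝ) : ℝ :=
  let ρ := Real.sqrt (ξ ^ 2 + η ^ 2);
  let ρ1 := Real.sqrt ((ξ + μ) ^ 2 + η ^ 2);
  let ρ2 := Real.sqrt ((ξ + μ - 1) ^ 2 + η ^ 2);
  -(3 / 2) * (1 - μ * (1 - μ) / 3) * ρ ^ 2 + ρ ^ 4 / 8
    + (3 / 2) * ((1 - μ) / ρ1 + μ / ρ2) * ρ ^ 2
    - (1 / 2) * ((1 - μ) ^ 2 / ρ1 ^ 2 + μ ^ 2 / ρ2 ^ 2)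
    + μ * (1 - μ) * ((7 * ξ / 2) * (1 / ρ1 - 1 / ρ2)
        - (η ^ 2 / 2) * (μ / ρ1 ^ 3 + (1 - μ) / ρ2 ^ 3)
        + (3 * μ - 2) / (2 * ρ1) - 1 / (ρ1 * ρ2) + (1 - 3 * μ) / (2 * ρ2))

/-- The relativistic effective potential `W = w0 + w1/c²` at zero synodic velocity. -/
noncomputable def W (μ c ξ η : ℝ) : ℝ := w0 μ ξ η + w1 μ ξ η / c ^ 2

/-- `f = ∂W/∂ξ`, the first equilibrium equation of the post-Newtonian restricted
three body problem. -/
noncomputable def f (μ c ξ η : ℝ) : ℝ := deriv (fun s => W μ c s η) ξ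

/-- `g = ∂W/∂η`, the second equilibrium equation of the post-Newtonian restricted
three body problem. -/
noncomputable def g (μ c ξ η : ℝ) : ℝ := deriv (fun s => W μ c ξ s) η

set_option maxHeartbeats 4000000 in
lemma hasDerivAt_W_fst (μ C η x : ℝ) (hC : C ≠ 0)
    (h1 : 0 < (x+μ)^2+η^2) (h2 : 0 < (x+μ-1)^2+η^2) :
    HasDerivAt (fun s : ℝ => w0 μ s η + w1 μ s η / C)
      (x - (1-μ)*(x+μ)*Real.sqrt ((x+μ)^2+η^2)/((x+μ)^2+η^2)^2
         - μ*(x+μ-1)*Real.sqrt ((x+μ-1)^2+η^2)/((x+μ-1)^2+η^2)^2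
       + ( -((3-μ*(1-μ))*x) + x*(x^2+η^2)/2
           - (3/2)*(1-μ)*(x+μ)*(x^2+η^2)*Real.sqrt ((x+μ)^2+η^2)/((x+μ)^2+η^2)^2
           - (3/2)*μ*(x+μ-1)*(x^2+η^2)*Real.sqrt ((x+μ-1)^2+η^2)/((x+μ-1)^2+η^2)^2
           + 3*x*(1-μ)*Real.sqrt ((x+μ)^2+η^2)/((x+μ)^2+η^2)
           + 3*x*μ*Real.sqrt ((x+μ-1)^2+η^2)/((x+μ-1)^2+η^2)
           + (1-μ)^2*(x+μ)/((x+μ)^2+η^2)^2 + μ^2*(x+μ-1)/((x+μ-1)^2+η^2)^2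
           + μ*(1-μ)*( (7/2)*(Real.sqrt ((x+μ)^2+η^2)/((x+μ)^2+η^2)
                              - Real.sqrt ((x+μ-1)^2+η^2)/((x+μ-1)^2+η^2))
              - (7*x/2)*((x+μ)*Real.sqrt ((x+μ)^2+η^2)/((x+μ)^2+η^2)^2
                         - (x+μ-1)*Real.sqrt ((x+μ-1)^2+η^2)/((x+μ-1)^2+η^2)^2)
              + (3*η^2/2)*(μ*(x+μ)*Real.sqrt ((x+μ)^2+η^2)/((x+μ)^2+η^2)^3
                           + (1-μ)*(x+μ-1)*Real.sqrt ((x+μ-1)^2+η^2)/((x+μ-1)^2+η^2)^3)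
              - (3*μ-2)*(x+μ)*Real.sqrt ((x+μ)^2+η^2)/(2*((x+μ)^2+η^2)^2)
              + (x+μ)*Real.sqrt ((x+μ)^2+η^2)*Real.sqrt ((x+μ-1)^2+η^2)/(((x+μ)^2+η^2)^2*((x+μ-1)^2+η^2))
              + (x+μ-1)*Real.sqrt ((x+μ)^2+η^2)*Real.sqrt ((x+μ-1)^2+η^2)/(((x+μ)^2+η^2)*((x+μ-1)^2+η^2)^2)
              - (1-3*μ)*(x+μ-1)*Real.sqrt ((x+μ-1)^2+η^2)/(2*((x+μ-1)^2+η^2)^2) ) ) / C) x := by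
  have hs1 : Real.sqrt ((x+μ)^2+η^2) ≠ 0 := Real.sqrt_ne_zero'.mpr h1
  have hs2 : Real.sqrt ((x+μ-1)^2+η^2) ≠ 0 := Real.sqrt_ne_zero'.mpr h2
  have hq1 : HasDerivAt (fun s : ℝ => (s+μ)^2+η^2) (2*(x+μ)) x := by
    simpa using (((hasDerivAt_id x).add_const μ).pow 2).add_const (η^2)
  have hq2 : HasDerivAt (fun s : ℝ => (s+μ-1)^2+η^2) (2*(x+μ-1)) x := by
    simpa using ((((hasDerivAt_id x).add_const μ).sub_const 1).pow 2).add_const (η^2)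
  have hr1 : HasDerivAt (fun s : ℝ => Real.sqrt ((s+μ)^2+η^2))
      ((x+μ)/Real.sqrt ((x+μ)^2+η^2)) x := by
    convert hq1.sqrt h1.ne' using 1
    rw [mul_comm 2 (Real.sqrt _), ← div_div, mul_div_assoc, mul_comm, mul_div_assoc,
      div_self (two_ne_zero), mul_one]
  have hr2 : HasDerivAt (fun s : ℝ => Real.sqrt ((s+μ-1)^2+η^2))
      ((x+μ-1)/Real.sqrt ((x+μ-1)^2+η^2)) x := by
    convert hq2.sqrt h2.ne' using 1
    rw [mul_comm 2 (Real.sqrt _), ← div_div, mul_div_assoc, mul_comm, mul_div_assoc,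
      div_self (two_ne_zero), mul_one]
  have hu : HasDerivAt (fun s : ℝ => s^2+η^2) (2*x) x := by
    simpa using (hasDerivAt_pow 2 x).add_const (η^2)
  have hfun : (fun s : ℝ => w0 μ s η + w1 μ s η / C)
      = (fun s : ℝ =>
        (s^2+η^2)/2 + (1-μ)/Real.sqrt ((s+μ)^2+η^2) + μ/Real.sqrt ((s+μ-1)^2+η^2)
        + ( (-(3/2)*(1-μ*(1-μ)/3))*(s^2+η^2) + (s^2+η^2)^2/8
          + (3/2)*((1-μ)/Real.sqrt ((s+μ)^2+η^2) + μ/Real.sqrt ((s+μ-1)^2+η^2))*(s^2+η^2)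
          + (-(1/2))*((1-μ)^2/((s+μ)^2+η^2) + μ^2/((s+μ-1)^2+η^2))
          + (μ*(1-μ))*( (7*s/2)*(1/Real.sqrt ((s+μ)^2+η^2) - 1/Real.sqrt ((s+μ-1)^2+η^2))
              - (η^2/2)*(μ/Real.sqrt ((s+μ)^2+η^2)^3 + (1-μ)/Real.sqrt ((s+μ-1)^2+η^2)^3)
              + (3*μ-2)/(2*Real.sqrt ((s+μ)^2+η^2))
              - 1/(Real.sqrt ((s+μ)^2+η^2)*Real.sqrt ((s+μ-1)^2+η^2))
              + (1-3*μ)/(2*Real.sqrt ((s+μ-1)^2+η^2)) ) ) / C) := by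
    funext s
    have e0 : Real.sqrt (s^2+η^2)^2 = s^2+η^2 := Real.sq_sqrt (by positivity)
    have e4 : Real.sqrt (s^2+η^2)^4 = (s^2+η^2)^2 := by
      rw [show (4:ℕ) = 2*2 from rfl, pow_mul, e0]
    have e1 : Real.sqrt ((s+μ)^2+η^2)^2 = (s+μ)^2+η^2 := Real.sq_sqrt (by positivity)
    have e2 : Real.sqrt ((s+μ-1)^2+η^2)^2 = (s+μ-1)^2+η^2 := Real.sq_sqrt (by positivity)
    simp only [w0, w1]
    rw [e0, e4, e1, e2]
    ring
  rw [hfun]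
  have B1 := (hasDerivAt_const x (1-μ)).div hr1 hs1
  have B2 := (hasDerivAt_const x μ).div hr2 hs2
  have T1 := hu.const_mul (-(3/2)*(1-μ*(1-μ)/3))
  have T2 := (hu.pow 2).div_const 8
  have T3 := ((B1.add B2).const_mul (3/2 : ℝ)).mul hu
  have T4 := (((hasDerivAt_const x ((1-μ)^2)).div hq1 h1.ne').add
      ((hasDerivAt_const x (μ^2)).div hq2 h2.ne')).const_mul (-(1/2) : ℝ)
  have t5a := (((hasDerivAt_id' (𝕜 := ℝ) x).const_mul (7:ℝ)).div_const 2).mul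
      (((hasDerivAt_const x (1:ℝ)).div hr1 hs1).sub ((hasDerivAt_const x (1:ℝ)).div hr2 hs2))
  have t5b := (((hasDerivAt_const x μ).div (hr1.pow 3) (pow_ne_zero 3 hs1)).add
      ((hasDerivAt_const x (1-μ)).div (hr2.pow 3) (pow_ne_zero 3 hs2))).const_mul (η^2/2)
  have t5c := (hasDerivAt_const x (3*μ-2)).div (hr1.const_mul (2:ℝ))
      (by simpa using hs1)
  have t5d := (hasDerivAt_const x (1:ℝ)).div (hr1.mul hr2) (mul_ne_zero hs1 hs2)
  have t5e := (hasDerivAt_const x (1-3*μ)).div (hr2.const_mul (2:ℝ))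
      (by simpa using hs2)
  have T5 := ((((t5a.sub t5b).add t5c).sub t5d).add t5e).const_mul (μ*(1-μ))
  have HW1 := ((((T1.add T2).add T3).add T4).add T5).div_const C
  have Htot := (((hu.div_const 2).add B1).add B2).add HW1
  convert Htot using 1
  case e'_4 => rfl
  case e'_5 => rfl
  case e'_8 => rfl
  simp only [Pi.pow_apply, Pi.mul_apply, Pi.div_apply, Pi.add_apply, Pi.sub_apply]
  set r1 := Real.sqrt ((x+μ)^2+η^2) with hr1d
  set r2 := Real.sqrt ((x+μ-1)^2+η^2) with hr2d
  have e1 : r1^2 = (x+μ)^2+η^2 := Real.sq_sqrt h1.le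
  have e2 : r2^2 = (x+μ-1)^2+η^2 := Real.sq_sqrt h2.le
  rw [← e1, ← e2]
  field_simp
  ring

set_option maxHeartbeats 4000000 in
lemma hasDerivAt_W_snd (μ C x η : ℝ) (hC : C ≠ 0)
    (h1 : 0 < (x+μ)^2+η^2) (h2 : 0 < (x+μ-1)^2+η^2) :
    HasDerivAt (fun t : ℝ => w0 μ x t + w1 μ x t / C)
      (η - (1-μ)*η*Real.sqrt ((x+μ)^2+η^2)/((x+μ)^2+η^2)^2
         - μ*η*Real.sqrt ((x+μ-1)^2+η^2)/((x+μ-1)^2+η^2)^2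
       + ( -((3-μ*(1-μ))*η) + η*(x^2+η^2)/2
           - (3/2)*(1-μ)*η*(x^2+η^2)*Real.sqrt ((x+μ)^2+η^2)/((x+μ)^2+η^2)^2
           - (3/2)*μ*η*(x^2+η^2)*Real.sqrt ((x+μ-1)^2+η^2)/((x+μ-1)^2+η^2)^2
           + 3*η*(1-μ)*Real.sqrt ((x+μ)^2+η^2)/((x+μ)^2+η^2)
           + 3*η*μ*Real.sqrt ((x+μ-1)^2+η^2)/((x+μ-1)^2+η^2)
           + (1-μ)^2*η/((x+μ)^2+η^2)^2 + μ^2*η/((x+μ-1)^2+η^2)^2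
           + μ*(1-μ)*( -((7*x/2)*(η*Real.sqrt ((x+μ)^2+η^2)/((x+μ)^2+η^2)^2
                         - η*Real.sqrt ((x+μ-1)^2+η^2)/((x+μ-1)^2+η^2)^2))
              - η*(μ*Real.sqrt ((x+μ)^2+η^2)/((x+μ)^2+η^2)^2
                   + (1-μ)*Real.sqrt ((x+μ-1)^2+η^2)/((x+μ-1)^2+η^2)^2)
              + (3*η^3/2)*(μ*Real.sqrt ((x+μ)^2+η^2)/((x+μ)^2+η^2)^3
                           + (1-μ)*Real.sqrt ((x+μ-1)^2+η^2)/((x+μ-1)^2+η^2)^3)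
              - (3*μ-2)*η*Real.sqrt ((x+μ)^2+η^2)/(2*((x+μ)^2+η^2)^2)
              + η*Real.sqrt ((x+μ)^2+η^2)*Real.sqrt ((x+μ-1)^2+η^2)/(((x+μ)^2+η^2)^2*((x+μ-1)^2+η^2))
              + η*Real.sqrt ((x+μ)^2+η^2)*Real.sqrt ((x+μ-1)^2+η^2)/(((x+μ)^2+η^2)*((x+μ-1)^2+η^2)^2)
              - (1-3*μ)*η*Real.sqrt ((x+μ-1)^2+η^2)/(2*((x+μ-1)^2+η^2)^2) ) ) / C) η := by
  have hs1 : Real.sqrt ((x+μ)^2+η^2) ≠ 0 := Real.sqrt_ne_zero'.mpr h1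
  have hs2 : Real.sqrt ((x+μ-1)^2+η^2) ≠ 0 := Real.sqrt_ne_zero'.mpr h2
  have hq1 : HasDerivAt (fun t : ℝ => (x+μ)^2+t^2) (2*η) η := by
    simpa using (hasDerivAt_pow 2 η).const_add ((x+μ)^2)
  have hq2 : HasDerivAt (fun t : ℝ => (x+μ-1)^2+t^2) (2*η) η := by
    simpa using (hasDerivAt_pow 2 η).const_add ((x+μ-1)^2)
  have hr1 : HasDerivAt (fun t : ℝ => Real.sqrt ((x+μ)^2+t^2))
      (η/Real.sqrt ((x+μ)^2+η^2)) η := by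
    convert hq1.sqrt h1.ne' using 1
    rw [mul_comm 2 (Real.sqrt _), ← div_div, mul_div_assoc, mul_comm, mul_div_assoc,
      div_self (two_ne_zero), mul_one]
  have hr2 : HasDerivAt (fun t : ℝ => Real.sqrt ((x+μ-1)^2+t^2))
      (η/Real.sqrt ((x+μ-1)^2+η^2)) η := by
    convert hq2.sqrt h2.ne' using 1
    rw [mul_comm 2 (Real.sqrt _), ← div_div, mul_div_assoc, mul_comm, mul_div_assoc,
      div_self (two_ne_zero), mul_one]
  have hu : HasDerivAt (fun t : ℝ => x^2+t^2) (2*η) η := by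
    simpa using (hasDerivAt_pow 2 η).const_add (x^2)
  have hfun : (fun t : ℝ => w0 μ x t + w1 μ x t / C)
      = (fun t : ℝ =>
        (x^2+t^2)/2 + (1-μ)/Real.sqrt ((x+μ)^2+t^2) + μ/Real.sqrt ((x+μ-1)^2+t^2)
        + ( (-(3/2)*(1-μ*(1-μ)/3))*(x^2+t^2) + (x^2+t^2)^2/8
          + (3/2)*((1-μ)/Real.sqrt ((x+μ)^2+t^2) + μ/Real.sqrt ((x+μ-1)^2+t^2))*(x^2+t^2)
          + (-(1/2))*((1-μ)^2/((x+μ)^2+t^2) + μ^2/((x+μ-1)^2+t^2))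
          + (μ*(1-μ))*( ((7*x/2))*(1/Real.sqrt ((x+μ)^2+t^2) - 1/Real.sqrt ((x+μ-1)^2+t^2))
              - (t^2/2)*(μ/Real.sqrt ((x+μ)^2+t^2)^3 + (1-μ)/Real.sqrt ((x+μ-1)^2+t^2)^3)
              + (3*μ-2)/(2*Real.sqrt ((x+μ)^2+t^2))
              - 1/(Real.sqrt ((x+μ)^2+t^2)*Real.sqrt ((x+μ-1)^2+t^2))
              + (1-3*μ)/(2*Real.sqrt ((x+μ-1)^2+t^2)) ) ) / C) := by
    funext t
    have e0 : Real.sqrt (x^2+t^2)^2 = x^2+t^2 := Real.sq_sqrt (by positivity)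
    have e4 : Real.sqrt (x^2+t^2)^4 = (x^2+t^2)^2 := by
      rw [show (4:ℕ) = 2*2 from rfl, pow_mul, e0]
    have e1 : Real.sqrt ((x+μ)^2+t^2)^2 = (x+μ)^2+t^2 := Real.sq_sqrt (by positivity)
    have e2 : Real.sqrt ((x+μ-1)^2+t^2)^2 = (x+μ-1)^2+t^2 := Real.sq_sqrt (by positivity)
    simp only [w0, w1]
    rw [e0, e4, e1, e2]
    ring
  rw [hfun]
  have B1 := (hasDerivAt_const η (1-μ)).div hr1 hs1
  have B2 := (hasDerivAt_const η μ).div hr2 hs2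
  have T1 := hu.const_mul (-(3/2)*(1-μ*(1-μ)/3))
  have T2 := (hu.pow 2).div_const 8
  have T3 := ((B1.add B2).const_mul (3/2 : ℝ)).mul hu
  have T4 := (((hasDerivAt_const η ((1-μ)^2)).div hq1 h1.ne').add
      ((hasDerivAt_const η (μ^2)).div hq2 h2.ne')).const_mul (-(1/2) : ℝ)
  have t5a := ((((hasDerivAt_const η (1:ℝ)).div hr1 hs1)).sub
      ((hasDerivAt_const η (1:ℝ)).div hr2 hs2)).const_mul (7*x/2)
  have t5b := ((hasDerivAt_pow 2 η).div_const 2).mul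
      (((hasDerivAt_const η μ).div (hr1.pow 3) (pow_ne_zero 3 hs1)).add
       ((hasDerivAt_const η (1-μ)).div (hr2.pow 3) (pow_ne_zero 3 hs2)))
  have t5c := (hasDerivAt_const η (3*μ-2)).div (hr1.const_mul (2:ℝ))
      (by simpa using hs1)
  have t5d := (hasDerivAt_const η (1:ℝ)).div (hr1.mul hr2) (mul_ne_zero hs1 hs2)
  have t5e := (hasDerivAt_const η (1-3*μ)).div (hr2.const_mul (2:ℝ))
      (by simpa using hs2)
  have T5 := ((((t5a.sub t5b).add t5c).sub t5d).add t5e).const_mul (μ*(1-μ))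
  have HW1 := ((((T1.add T2).add T3).add T4).add T5).div_const C
  have Htot := (((hu.div_const 2).add B1).add B2).add HW1
  convert Htot using 1
  case e'_4 => rfl
  case e'_5 => rfl
  case e'_8 => rfl
  simp only [Pi.pow_apply, Pi.mul_apply, Pi.div_apply, Pi.add_apply, Pi.sub_apply]
  set r1 := Real.sqrt ((x+μ)^2+η^2) with hr1d
  set r2 := Real.sqrt ((x+μ-1)^2+η^2) with hr2d
  have e1 : r1^2 = (x+μ)^2+η^2 := Real.sq_sqrt h1.le
  have e2 : r2^2 = (x+μ-1)^2+η^2 := Real.sq_sqrt h2.le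
  rw [← e1, ← e2]
  field_simp
  ring

set_option maxHeartbeats 4000000 in
/-- **Precision of the approximate relativistic `L4` (Earth–Sun).**
With the Earth–Sun values of `μ` and `c`, the paper's high-precision point `Z0`
satisfies `|f(Z0)| < 10⁻³¹` and `|g(Z0)| < 10⁻³¹`. -/
theorem Z0_precision_earth_sun
    (μ c : ℝ) (hμ : μ = 59729 / 19885499729)
    (hc : c = (149896229 / 10) * Real.sqrt (1495978707 / 3317816087784734))
    (ξ0 η0 : ℝ)
    (hξ0 : ξ0 = 2499985012616009587660193140271 / 5000000000000000000000000000000)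
    (hη0 : η0 = 1082531750278361975463116188557 / 1250000000000000000000000000000) :
    |f μ c ξ0 η0| < 1 / 10 ^ 31 ∧ |g μ c ξ0 η0| < 1 / 10 ^ 31 := by
  have hc2 : c^2 = (149896229 / 10 : ℝ)^2 * (1495978707 / 3317816087784734) := by
    rw [hc, mul_pow, Real.sq_sqrt (by norm_num : (0:ℝ) ≤ 1495978707 / 3317816087784734)]
  have hCne : c^2 ≠ 0 := by rw [hc2]; norm_num
  have h1 : (0:ℝ) < (ξ0+μ)^2+η0^2 := by rw [hμ, hξ0, hη0]; norm_num
  have h2 : (0:ℝ) < (ξ0+μ-1)^2+η0^2 := by rw [hμ, hξ0, hη0]; norm_num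
  have Hf := (hasDerivAt_W_fst μ (c^2) η0 ξ0 hCne h1 h2).deriv
  have Hg := (hasDerivAt_W_snd μ (c^2) ξ0 η0 hCne h1 h2).deriv
  rw [hμ, hξ0, hη0, hc2] at Hf Hg
  have hl1 : (99999999999999258798682110482752414105253712283369 / 10^50 : ℝ) < Real.sqrt (((2499985012616009587660193140271 / 5000000000000000000000000000000 : ℝ) + (59729 / 19885499729 : ℝ))^2 + (1082531750278361975463116188557 / 1250000000000000000000000000000 : ℝ)^2) :=
    (Real.lt_sqrt (by norm_num)).mpr (by norm_num)
  have hu1 : Real.sqrt (((2499985012616009587660193140271 / 5000000000000000000000000000000 : ℝ) + (59729 / 19885499729 : ℝ))^2 + (1082531750278361975463116188557 / 1250000000000000000000000000000 : ℝ)^2) < (99999999999999258798682110482752414105253712283371 / 10^50 : ℝ) :=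
    (Real.sqrt_lt' (by norm_num)).mpr (by norm_num)
  have hl2 : (99999999383087709692409316691467142177495316608742 / 10^50 : ℝ) < Real.sqrt (((2499985012616009587660193140271 / 5000000000000000000000000000000 : ℝ) + (59729 / 19885499729 : ℝ) - 1)^2 + (1082531750278361975463116188557 / 1250000000000000000000000000000 : ℝ)^2) :=
    (Real.lt_sqrt (by norm_num)).mpr (by norm_num)
  have hu2 : Real.sqrt (((2499985012616009587660193140271 / 5000000000000000000000000000000 : ℝ) + (59729 / 19885499729 : ℝ) - 1)^2 + (1082531750278361975463116188557 / 1250000000000000000000000000000 : ℝ)^2) < (99999999383087709692409316691467142177495316608744 / 10^50 : ℝ) :=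
    (Real.sqrt_lt' (by norm_num)).mpr (by norm_num)
  constructor
  · show |deriv (fun s => W μ c s η0) ξ0| < 1 / 10 ^ 31
    have : (fun s => W μ c s η0) = (fun s : ℝ => w0 μ s η0 + w1 μ s η0 / c^2) := rfl
    rw [this, hμ, hξ0, hη0, hc2, Hf, abs_lt]
    constructor
    all_goals ring_nf at hl1 hu1 hl2 hu2 ⊢
    all_goals
      nlinarith [hl1, hu1, hl2, hu2, mul_pos (sub_pos.mpr hu1) (sub_pos.mpr hu2),
        mul_pos (sub_pos.mpr hl1) (sub_pos.mpr hl2),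
        mul_pos (sub_pos.mpr hu1) (sub_pos.mpr hl2),
        mul_pos (sub_pos.mpr hl1) (sub_pos.mpr hu2)]
  · show |deriv (fun t => W μ c ξ0 t) η0| < 1 / 10 ^ 31
    have : (fun t => W μ c ξ0 t) = (fun t : ℝ => w0 μ ξ0 t + w1 μ ξ0 t / c^2) := rfl
    rw [this, hμ, hξ0, hη0, hc2, Hg, abs_lt]
    constructor
    all_goals ring_nf at hl1 hu1 hl2 hu2 ⊢
    all_goals
      nlinarith [hl1, hu1, hl2, hu2, mul_pos (sub_pos.mpr hu1) (sub_pos.mpr hu2),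
        mul_pos (sub_pos.mpr hl1) (sub_pos.mpr hl2),
        mul_pos (sub_pos.mpr hu1) (sub_pos.mpr hl2),
        mul_pos (sub_pos.mpr hl1) (sub_pos.mpr hu2)]
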